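/- Let a < b be real, U ⊆ ℂ open with [a,b] ⊂ U, and ν holomorphic on U. Then there exist C > 0 and δ > 0 such that for all λ ∈ ℂ∖[a,b] with 0 < |λ − b| < δ, one has | ∫_a^b (ν(μ) − ν(b))/(μ − λ) dμ | ≤ C; and similarly with the endpoint b replaced by a (subtracting ν(a)). -/

import Mathlib

open Complex Set MeasureTheory intervalIntegral

private lemma norm_log_le' (z : ℂ) : ‖Complex.log z‖ ≤ |Real.log ‖z‖| + Real.pi := by
  calc ‖Complex.log z‖ ≤ |(Complex.log z).re| + |(Complex.log z).im| :=
        Complex.norm_le_abs_re_add_abs_im _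
    _ ≤ |Real.log ‖z‖| + Real.pi := by
        rw [Complex.log_re, Complex.log_im]
        exact add_le_add le_rfl (Complex.abs_arg_le_pi z)

private lemma mul_abs_log_le' (x : ℝ) (h0 : 0 < x) (h1 : x ≤ 1) : x * |Real.log x| ≤ 1 := by
  have hlog : Real.log x ≤ 0 := Real.log_nonpos h0.le h1
  rw [abs_of_nonpos hlog, ← Real.log_inv]
  have h2 : Real.log x⁻¹ ≤ x⁻¹ - 1 := Real.log_le_sub_one_of_pos (by positivity)
  nlinarith [mul_inv_cancel₀ (ne_of_gt h0)]

private lemma ftc_left' (a b : ℝ) (lam : ℂ)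
    (h : ∀ x ∈ Set.uIcc a b, lam - (x : ℂ) ∈ Complex.slitPlane) :
    ∫ μ : ℝ in a..b, ((μ : ℂ) - lam)⁻¹
      = Complex.log (lam - b) - Complex.log (lam - a) := by
  have hne : ∀ x ∈ Set.uIcc a b, (x : ℂ) - lam ≠ 0 := by
    intro x hx hc
    exact Complex.slitPlane_ne_zero (h x hx) (by rw [sub_eq_zero] at hc ⊢; exact hc.symm)
  have hd : ∀ x ∈ Set.uIcc a b,
      HasDerivAt (fun y : ℝ => Complex.log (lam - (y : ℂ))) (((x : ℂ) - lam)⁻¹) x := by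
    intro x hx
    have h2 : HasDerivAt (fun w : ℂ => lam - w) (-1) (x : ℂ) :=
      (hasDerivAt_id _).const_sub lam
    have h3 := (Complex.hasDerivAt_log (h x hx)).comp (x : ℂ) h2
    have h1 : HasDerivAt (fun w : ℂ => Complex.log (lam - w)) (((x : ℂ) - lam)⁻¹) (x : ℂ) := by
      have : (lam - (x : ℂ))⁻¹ * (-1) = ((x : ℂ) - lam)⁻¹ := by
        rw [show ((x : ℂ) - lam) = -(lam - (x : ℂ)) by ring, inv_neg]; ring
      rw [← this]
      exact h3
    exact h1.comp_ofReal
  have hint : IntervalIntegrable (fun μ : ℝ => ((μ : ℂ) - lam)⁻¹) volume a b := by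
    apply ContinuousOn.intervalIntegrable
    exact ((Complex.continuous_ofReal.continuousOn).sub continuousOn_const).inv₀ hne
  exact intervalIntegral.integral_eq_sub_of_hasDerivAt hd hint

private lemma ftc_right' (a b : ℝ) (lam : ℂ)
    (h : ∀ x ∈ Set.uIcc a b, (x : ℂ) - lam ∈ Complex.slitPlane) :
    ∫ μ : ℝ in a..b, ((μ : ℂ) - lam)⁻¹
      = Complex.log ((b : ℂ) - lam) - Complex.log ((a : ℂ) - lam) := by
  have hne : ∀ x ∈ Set.uIcc a b, (x : ℂ) - lam ≠ 0 := fun x hx =>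
    Complex.slitPlane_ne_zero (h x hx)
  have hd : ∀ x ∈ Set.uIcc a b,
      HasDerivAt (fun y : ℝ => Complex.log ((y : ℂ) - lam)) (((x : ℂ) - lam)⁻¹) x := by
    intro x hx
    have h2 : HasDerivAt (fun w : ℂ => w - lam) 1 (x : ℂ) :=
      (hasDerivAt_id _).sub_const lam
    have h3 := (Complex.hasDerivAt_log (h x hx)).comp (x : ℂ) h2
    have h1 : HasDerivAt (fun w : ℂ => Complex.log (w - lam)) (((x : ℂ) - lam)⁻¹) (x : ℂ) := by
      rw [mul_one] at h3; exact h3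
    exact h1.comp_ofReal
  have hint : IntervalIntegrable (fun μ : ℝ => ((μ : ℂ) - lam)⁻¹) volume a b := by
    apply ContinuousOn.intervalIntegrable
    exact ((Complex.continuous_ofReal.continuousOn).sub continuousOn_const).inv₀ hne
  exact intervalIntegral.integral_eq_sub_of_hasDerivAt hd hint


private lemma lipschitz_aux' (a b : ℝ) (U : Set ℂ) (hU : IsOpen U)
    (hUab : (fun x : ℝ => (x : ℂ)) '' Set.Icc a b ⊆ U)
    (ν : ℂ → ℂ) (hν : DifferentiableOn ℂ ν U) :
    ∃ L : ℝ, 0 ≤ L ∧ ∀ x ∈ Set.Icc a b, ∀ y ∈ Set.Icc a b,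
      ‖ν (x : ℂ) - ν (y : ℂ)‖ ≤ L * |x - y| := by
  set K := (fun x : ℝ => (x : ℂ)) '' Set.Icc a b with hKdef
  have hK : IsCompact K := (isCompact_Icc).image Complex.continuous_ofReal
  have han : AnalyticOnNhd ℂ ν U := hν.analyticOnNhd hU
  have hfd : ContinuousOn (fderiv ℂ ν) U := han.fderiv.continuousOn
  obtain ⟨M, hM⟩ := hK.exists_bound_of_continuousOn (hfd.mono hUab)
  set L := max M 0 with hLdef
  have hL0 : 0 ≤ L := le_max_right _ _
  have hconv : Convex ℝ K := by
    have h1 : Convex ℝ ((Complex.ofRealAm.toLinearMap : ℝ →ₗ[ℝ] ℂ) '' Set.Icc a b) :=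
      (convex_Icc a b).linear_image _
    convert h1 using 2
    all_goals rfl
  refine ⟨L, hL0, fun x hx y hy => ?_⟩
  have hxK : (x : ℂ) ∈ K := ⟨x, hx, rfl⟩
  have hyK : (y : ℂ) ∈ K := ⟨y, hy, rfl⟩
  have key : ‖ν (x : ℂ) - ν (y : ℂ)‖ ≤ L * ‖(x : ℂ) - (y : ℂ)‖ := by
    apply hconv.norm_image_sub_le_of_norm_hasFDerivWithin_le
      (f' := fun z => fderiv ℂ ν z)
      (fun z hz => ((hν.differentiableAt (hU.mem_nhds (hUab hz))).hasFDerivAt).hasFDerivWithinAt)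
      (fun z hz => le_trans (hM z hz) (le_max_left _ _)) hyK hxK
  calc ‖ν (x : ℂ) - ν (y : ℂ)‖ ≤ L * ‖(x : ℂ) - (y : ℂ)‖ := key
    _ = L * |x - y| := by
        rw [← Complex.ofReal_sub, Complex.norm_real, Real.norm_eq_abs]

private lemma main_aux' (a b : ℝ) (hab : a < b) (U : Set ℂ) (hU : IsOpen U)
    (hUab : (fun x : ℝ => (x : ℂ)) '' Set.Icc a b ⊆ U)
    (ν : ℂ → ℂ) (hν : DifferentiableOn ℂ ν U) (e : ℝ) (he : e = a ∨ e = b) :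
    ∃ C > (0 : ℝ), ∃ δ > (0 : ℝ),
      ∀ lam : ℂ, lam ∉ (fun x : ℝ => (x : ℂ)) '' Set.Icc a b →
        0 < ‖lam - (e : ℂ)‖ → ‖lam - (e : ℂ)‖ < δ →
        ‖∫ μ in a..b, (ν μ - ν (e : ℂ)) / (μ - lam)‖ ≤ C := by
  obtain ⟨L, hL0, hL⟩ := lipschitz_aux' a b U hU hUab ν hν
  have hba : 0 < b - a := by linarith
  have hπ : (0 : ℝ) < Real.pi := Real.pi_pos
  set A : ℝ := |Real.log ((b - a) / 2)| + |Real.log (b - a + 1)| with hAdef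
  have hA0 : 0 ≤ A := by positivity
  set C : ℝ := L * (b - a) + L * (1 + Real.pi) + L * (b - a) * (A + Real.pi) + 1 with hCdef
  set δ : ℝ := min 1 ((b - a) / 2) with hδdef
  have hC0 : 0 < C := by
    have t1 : 0 ≤ L * (b - a) := mul_nonneg hL0 hba.le
    have t2 : 0 ≤ L * (1 + Real.pi) := mul_nonneg hL0 (by linarith)
    have t3 : 0 ≤ L * (b - a) * (A + Real.pi) := mul_nonneg t1 (by linarith)
    rw [hCdef]; linarith
  have hδ0 : 0 < δ := lt_min one_pos (by linarith)
  refine ⟨C, hC0, δ, hδ0, fun lam hlamK hpos hlt => ?_⟩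
  have hδ1 : ‖lam - (e : ℂ)‖ < 1 := lt_of_lt_of_le hlt (min_le_left _ _)
  have hδ2 : ‖lam - (e : ℂ)‖ < (b - a) / 2 := lt_of_lt_of_le hlt (min_le_right _ _)
  have hree : |lam.re - e| ≤ ‖lam - (e : ℂ)‖ := by
    have h : (lam - (e : ℂ)).re = lam.re - e := by simp
    rw [← h]
    exact Complex.abs_re_le_norm _
  have hre2 : |lam.re - e| < (b - a) / 2 := hree.trans_lt hδ2
  have hne : ∀ μ ∈ Set.Icc a b, (μ : ℂ) - lam ≠ 0 := by
    intro μ hμ hc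
    exact hlamK ⟨μ, hμ, sub_eq_zero.mp hc⟩
  have hnorm_pos : ∀ μ ∈ Set.Icc a b, 0 < ‖(μ : ℂ) - lam‖ := fun μ hμ =>
    norm_pos_iff.mpr (hne μ hμ)
  have hreal : lam.im = 0 → (lam.re < a ∨ b < lam.re) := by
    intro him
    have hlam_eq : lam = ((lam.re : ℝ) : ℂ) := by
      apply Complex.ext <;> simp [him]
    by_contra hcon
    push_neg at hcon
    exact hlamK ⟨lam.re, ⟨hcon.1, hcon.2⟩, hlam_eq.symm⟩
  have cont_inv : ContinuousOn (fun μ : ℝ => ((μ : ℂ) - lam)⁻¹) (Set.uIcc a b) := by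
    rw [Set.uIcc_of_le hab.le]
    exact ((Complex.continuous_ofReal.continuousOn).sub continuousOn_const).inv₀ hne
  have int_inv : IntervalIntegrable (fun μ : ℝ => ((μ : ℂ) - lam)⁻¹) volume a b :=
    cont_inv.intervalIntegrable
  have cont_ν : ContinuousOn (fun μ : ℝ => ν (μ : ℂ)) (Set.uIcc a b) := by
    rw [Set.uIcc_of_le hab.le]
    exact (hν.continuousOn.comp (Complex.continuous_ofReal.continuousOn)
      (fun x hx => hUab ⟨x, hx, rfl⟩))
  -- facts about the far endpoint logarithm, stated for both possible far values
  have hfarkey : ∀ w : ℂ, (b - a) / 2 ≤ ‖w‖ → ‖w‖ ≤ b - a + 1 →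
      ‖Complex.log w‖ ≤ A + Real.pi := by
    intro w hlo hhi
    have hw0 : (0 : ℝ) < ‖w‖ := lt_of_lt_of_le (by linarith) hlo
    have habs : |Real.log ‖w‖| ≤ A := by
      rw [abs_le]
      constructor
      · have hmono : Real.log ((b - a) / 2) ≤ Real.log ‖w‖ :=
          Real.log_le_log (by linarith) hlo
        have h1 := neg_abs_le (Real.log ((b - a) / 2))
        have h2 := abs_nonneg (Real.log (b - a + 1))
        rw [hAdef]; linarith
      · have hmono : Real.log ‖w‖ ≤ Real.log (b - a + 1) :=
          Real.log_le_log hw0 hhi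
        have h1 := le_abs_self (Real.log (b - a + 1))
        have h2 := abs_nonneg (Real.log ((b - a) / 2))
        rw [hAdef]; linarith
    exact (norm_log_le' _).trans (by linarith)
  have hnearkey : ∀ w : ℂ, ‖w‖ = ‖lam - (e : ℂ)‖ → ∀ v : ℂ, ‖v‖ ≤ L * ‖lam - (e : ℂ)‖ →
      ‖v‖ * ‖Complex.log w‖ ≤ L * (1 + Real.pi) := by
    intro w hw v hv
    set x := ‖lam - (e : ℂ)‖ with hxdef
    have hxt : x * |Real.log x| ≤ 1 := mul_abs_log_le' x hpos hδ1.le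
    have hlog : ‖Complex.log w‖ ≤ |Real.log x| + Real.pi := by
      have := norm_log_le' w
      rwa [hw] at this
    calc ‖v‖ * ‖Complex.log w‖ ≤ (L * x) * (|Real.log x| + Real.pi) :=
          mul_le_mul hv hlog (norm_nonneg _) (mul_nonneg hL0 (norm_nonneg _))
      _ = L * (x * |Real.log x|) + (L * Real.pi) * x := by ring
      _ ≤ L * 1 + (L * Real.pi) * 1 :=
          add_le_add (mul_le_mul_of_nonneg_left hxt hL0)
            (mul_le_mul_of_nonneg_left hδ1.le (mul_nonneg hL0 hπ.le))
      _ = L * (1 + Real.pi) := by ring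
  rcases he with rfl | rfl
  · -- e is the left endpoint (e = a in the original notation)
    set c : ℝ := max e lam.re with hcdef
    have hre3 := abs_lt.mp hre2
    have hrb : lam.re < b := by linarith [hre3.2]
    have hc_mem : c ∈ Set.Icc e b := ⟨le_max_left _ _, max_le hab.le hrb.le⟩
    have h2 : |c - e| ≤ ‖lam - (e : ℂ)‖ := by
      rcases le_total lam.re e with h | h
      · rw [hcdef, max_eq_left h]
        simpa using hpos.le
      · rw [hcdef, max_eq_right h]
        exact hree
    have h1 : ∀ μ ∈ Set.Icc e b, |μ - c| ≤ ‖(μ : ℂ) - lam‖ := by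
      intro μ hμ
      have step : |μ - c| ≤ |μ - lam.re| := by
        rcases le_total lam.re e with h | h
        · rw [hcdef, max_eq_left h,
            _root_.abs_of_nonneg (by linarith [hμ.1] : (0:ℝ) ≤ μ - e),
            _root_.abs_of_nonneg (by linarith [hμ.1] : (0:ℝ) ≤ μ - lam.re)]
          linarith
        · rw [hcdef, max_eq_right h]
      have step2 : |μ - lam.re| ≤ ‖(μ : ℂ) - lam‖ := by
        have h : ((μ : ℂ) - lam).re = μ - lam.re := by simp
        rw [← h]
        exact Complex.abs_re_le_norm _
      exact step.trans step2
    have hslit : ∀ x ∈ Set.uIcc e b, (x : ℂ) - lam ∈ Complex.slitPlane := by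
      rw [Set.uIcc_of_le hab.le]
      intro x hx
      rw [Complex.mem_slitPlane_iff]
      by_cases him : lam.im = 0
      · left
        rcases hreal him with h | h
        · simp only [Complex.sub_re, Complex.ofReal_re, Complex.ofReal_im]
          linarith [hx.1]
        · exfalso
          have h3 : lam.re - e ≤ |lam.re - e| := le_abs_self _
          linarith [hre2]
      · right; simpa using him
    have ftc := ftc_right' e b lam hslit
    have int_g : IntervalIntegrable
        (fun μ : ℝ => (ν (μ : ℂ) - ν (c : ℂ)) / ((μ : ℂ) - lam)) volume e b := by
      apply ContinuousOn.intervalIntegrable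
      apply ContinuousOn.div (cont_ν.sub continuousOn_const)
        ((Complex.continuous_ofReal.continuousOn).sub continuousOn_const)
      rw [Set.uIcc_of_le hab.le]; exact hne
    have split : (∫ μ in e..b, (ν μ - ν (e : ℂ)) / (μ - lam))
        = (∫ μ in e..b, (ν (μ : ℂ) - ν (c : ℂ)) / ((μ : ℂ) - lam))
          + (ν (c : ℂ) - ν (e : ℂ))
            * (Complex.log ((b : ℂ) - lam) - Complex.log ((e : ℂ) - lam)) := by
      rw [← ftc, ← intervalIntegral.integral_const_mul,
        ← intervalIntegral.integral_add int_g (int_inv.const_mul _)]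
      apply intervalIntegral.integral_congr
      intro μ hμ
      simp only
      ring
    have bound1 : ‖∫ μ in e..b, (ν (μ : ℂ) - ν (c : ℂ)) / ((μ : ℂ) - lam)‖
        ≤ L * (b - e) := by
      have key := intervalIntegral.norm_integral_le_of_norm_le_const (C := L) (a := e) (b := b)
        (f := fun μ : ℝ => (ν (μ : ℂ) - ν (c : ℂ)) / ((μ : ℂ) - lam)) ?_
      · rwa [_root_.abs_of_pos hba] at key
      intro μ hμ
      rw [Set.uIoc_of_le hab.le] at hμ
      have hμ' : μ ∈ Set.Icc e b := ⟨hμ.1.le, hμ.2⟩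
      rw [norm_div, div_le_iff₀ (hnorm_pos μ hμ')]
      calc ‖ν (μ : ℂ) - ν (c : ℂ)‖ ≤ L * |μ - c| := hL μ hμ' c hc_mem
        _ ≤ L * ‖(μ : ℂ) - lam‖ := mul_le_mul_of_nonneg_left (h1 μ hμ') hL0
    have bval : ‖ν (c : ℂ) - ν (e : ℂ)‖ ≤ L * ‖lam - (e : ℂ)‖ :=
      (hL c hc_mem e ⟨le_rfl, hab.le⟩).trans (mul_le_mul_of_nonneg_left h2 hL0)
    have bval' : ‖ν (c : ℂ) - ν (e : ℂ)‖ ≤ L * (b - e) := by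
      refine (hL c hc_mem e ⟨le_rfl, hab.le⟩).trans (mul_le_mul_of_nonneg_left ?_ hL0)
      rw [_root_.abs_of_nonneg (by linarith [hc_mem.1] : (0:ℝ) ≤ c - e)]
      linarith [hc_mem.2]
    have hba' : ‖(b : ℂ) - (e : ℂ)‖ = b - e := by
      rw [← Complex.ofReal_sub, Complex.norm_real, Real.norm_eq_abs,
        _root_.abs_of_pos hba]
    have hfar_lo : (b - e) / 2 ≤ ‖(b : ℂ) - lam‖ := by
      have tri : ‖(b : ℂ) - (e : ℂ)‖ ≤ ‖(b : ℂ) - lam‖ + ‖lam - (e : ℂ)‖ := by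
        calc ‖(b : ℂ) - (e : ℂ)‖ = ‖((b : ℂ) - lam) + (lam - (e : ℂ))‖ := by
              rw [sub_add_sub_cancel]
          _ ≤ _ := norm_add_le _ _
      rw [hba'] at tri
      linarith [hδ2]
    have hfar_hi : ‖(b : ℂ) - lam‖ ≤ b - e + 1 := by
      have tri : ‖(b : ℂ) - lam‖ ≤ ‖(b : ℂ) - (e : ℂ)‖ + ‖(e : ℂ) - lam‖ := by
        calc ‖(b : ℂ) - lam‖ = ‖((b : ℂ) - (e : ℂ)) + ((e : ℂ) - lam)‖ := by
              rw [sub_add_sub_cancel]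
          _ ≤ _ := norm_add_le _ _
      rw [hba', norm_sub_rev ((e : ℝ) : ℂ) lam] at tri
      linarith [hδ1]
    have blog_far : ‖Complex.log ((b : ℂ) - lam)‖ ≤ A + Real.pi :=
      hfarkey _ hfar_lo hfar_hi
    have term_far : ‖ν (c : ℂ) - ν (e : ℂ)‖ * ‖Complex.log ((b : ℂ) - lam)‖
        ≤ L * (b - e) * (A + Real.pi) :=
      mul_le_mul bval' blog_far (norm_nonneg _) (mul_nonneg hL0 hba.le)
    have term_near : ‖ν (c : ℂ) - ν (e : ℂ)‖ * ‖Complex.log ((e : ℂ) - lam)‖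
        ≤ L * (1 + Real.pi) :=
      hnearkey _ (norm_sub_rev _ _) _ bval
    rw [split]
    calc ‖_ + _‖ ≤ ‖∫ μ in e..b, (ν (μ : ℂ) - ν (c : ℂ)) / ((μ : ℂ) - lam)‖
          + ‖(ν (c : ℂ) - ν (e : ℂ))
              * (Complex.log ((b : ℂ) - lam) - Complex.log ((e : ℂ) - lam))‖ :=
          norm_add_le _ _
      _ ≤ L * (b - e) + (‖ν (c : ℂ) - ν (e : ℂ)‖ * ‖Complex.log ((b : ℂ) - lam)‖
            + ‖ν (c : ℂ) - ν (e : ℂ)‖ * ‖Complex.log ((e : ℂ) - lam)‖) := by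
          refine add_le_add bound1 ?_
          rw [norm_mul]
          calc ‖ν (c : ℂ) - ν (e : ℂ)‖
                * ‖Complex.log ((b : ℂ) - lam) - Complex.log ((e : ℂ) - lam)‖
              ≤ ‖ν (c : ℂ) - ν (e : ℂ)‖
                * (‖Complex.log ((b : ℂ) - lam)‖ + ‖Complex.log ((e : ℂ) - lam)‖) :=
                mul_le_mul_of_nonneg_left (norm_sub_le _ _) (norm_nonneg _)
            _ = _ := by ring
      _ ≤ L * (b - e) + (L * (b - e) * (A + Real.pi) + L * (1 + Real.pi)) :=
          add_le_add le_rfl (add_le_add term_far term_near)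
      _ ≤ C := by rw [hCdef]; linarith
  · -- e is the right endpoint (e = b in the original notation)
    set c : ℝ := min e lam.re with hcdef
    have hre3 := abs_lt.mp hre2
    have hra : a < lam.re := by linarith [hre3.1]
    have hc_mem : c ∈ Set.Icc a e := ⟨le_min hab.le hra.le, min_le_left _ _⟩
    have h2 : |c - e| ≤ ‖lam - (e : ℂ)‖ := by
      rcases le_total lam.re e with h | h
      · rw [hcdef, min_eq_right h]
        exact hree
      · rw [hcdef, min_eq_left h]
        simpa using hpos.le
    have h1 : ∀ μ ∈ Set.Icc a e, |μ - c| ≤ ‖(μ : ℂ) - lam‖ := by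
      intro μ hμ
      have step : |μ - c| ≤ |μ - lam.re| := by
        rcases le_total lam.re e with h | h
        · rw [hcdef, min_eq_right h]
        · rw [hcdef, min_eq_left h,
            _root_.abs_of_nonpos (by linarith [hμ.2] : μ - e ≤ (0:ℝ)),
            _root_.abs_of_nonpos (by linarith [hμ.2] : μ - lam.re ≤ (0:ℝ))]
          linarith
      have step2 : |μ - lam.re| ≤ ‖(μ : ℂ) - lam‖ := by
        have h : ((μ : ℂ) - lam).re = μ - lam.re := by simp
        rw [← h]
        exact Complex.abs_re_le_norm _
      exact step.trans step2
    have hslit : ∀ x ∈ Set.uIcc a e, lam - (x : ℂ) ∈ Complex.slitPlane := by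
      rw [Set.uIcc_of_le hab.le]
      intro x hx
      rw [Complex.mem_slitPlane_iff]
      by_cases him : lam.im = 0
      · left
        rcases hreal him with h | h
        · exfalso
          have h3 : e - lam.re ≤ |lam.re - e| := by
            rw [abs_sub_comm]; exact le_abs_self _
          linarith [hre2]
        · simp only [Complex.sub_re, Complex.ofReal_re]
          linarith [hx.2]
      · right; simpa using him
    have ftc := ftc_left' a e lam hslit
    have int_g : IntervalIntegrable
        (fun μ : ℝ => (ν (μ : ℂ) - ν (c : ℂ)) / ((μ : ℂ) - lam)) volume a e := by
      apply ContinuousOn.intervalIntegrable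
      apply ContinuousOn.div (cont_ν.sub continuousOn_const)
        ((Complex.continuous_ofReal.continuousOn).sub continuousOn_const)
      rw [Set.uIcc_of_le hab.le]; exact hne
    have split : (∫ μ in a..e, (ν μ - ν (e : ℂ)) / (μ - lam))
        = (∫ μ in a..e, (ν (μ : ℂ) - ν (c : ℂ)) / ((μ : ℂ) - lam))
          + (ν (c : ℂ) - ν (e : ℂ))
            * (Complex.log (lam - (e : ℂ)) - Complex.log (lam - (a : ℂ))) := by
      rw [← ftc, ← intervalIntegral.integral_const_mul,
        ← intervalIntegral.integral_add int_g (int_inv.const_mul _)]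
      apply intervalIntegral.integral_congr
      intro μ hμ
      simp only
      ring
    have bound1 : ‖∫ μ in a..e, (ν (μ : ℂ) - ν (c : ℂ)) / ((μ : ℂ) - lam)‖
        ≤ L * (e - a) := by
      have key := intervalIntegral.norm_integral_le_of_norm_le_const (C := L) (a := a) (b := e)
        (f := fun μ : ℝ => (ν (μ : ℂ) - ν (c : ℂ)) / ((μ : ℂ) - lam)) ?_
      · rwa [_root_.abs_of_pos (by linarith : (0:ℝ) < e - a)] at key
      intro μ hμ
      rw [Set.uIoc_of_le hab.le] at hμ
      have hμ' : μ ∈ Set.Icc a e := ⟨hμ.1.le, hμ.2⟩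
      rw [norm_div, div_le_iff₀ (hnorm_pos μ hμ')]
      calc ‖ν (μ : ℂ) - ν (c : ℂ)‖ ≤ L * |μ - c| := hL μ hμ' c hc_mem
        _ ≤ L * ‖(μ : ℂ) - lam‖ := mul_le_mul_of_nonneg_left (h1 μ hμ') hL0
    have bval : ‖ν (c : ℂ) - ν (e : ℂ)‖ ≤ L * ‖lam - (e : ℂ)‖ :=
      (hL c hc_mem e ⟨hab.le, le_rfl⟩).trans (mul_le_mul_of_nonneg_left h2 hL0)
    have bval' : ‖ν (c : ℂ) - ν (e : ℂ)‖ ≤ L * (e - a) := by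
      refine (hL c hc_mem e ⟨hab.le, le_rfl⟩).trans (mul_le_mul_of_nonneg_left ?_ hL0)
      rw [_root_.abs_of_nonpos (by linarith [hc_mem.2] : c - e ≤ (0:ℝ))]
      linarith [hc_mem.1]
    have hba' : ‖(e : ℂ) - (a : ℂ)‖ = e - a := by
      rw [← Complex.ofReal_sub, Complex.norm_real, Real.norm_eq_abs,
        _root_.abs_of_pos (by linarith : (0:ℝ) < e - a)]
    have hfar_lo : (e - a) / 2 ≤ ‖lam - (a : ℂ)‖ := by
      have tri : ‖(e : ℂ) - (a : ℂ)‖ ≤ ‖(e : ℂ) - lam‖ + ‖lam - (a : ℂ)‖ := by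
        calc ‖(e : ℂ) - (a : ℂ)‖ = ‖((e : ℂ) - lam) + (lam - (a : ℂ))‖ := by
              rw [sub_add_sub_cancel]
          _ ≤ _ := norm_add_le _ _
      rw [hba', norm_sub_rev] at tri
      linarith [hδ2]
    have hfar_hi : ‖lam - (a : ℂ)‖ ≤ e - a + 1 := by
      have tri : ‖lam - (a : ℂ)‖ ≤ ‖lam - (e : ℂ)‖ + ‖(e : ℂ) - (a : ℂ)‖ := by
        calc ‖lam - (a : ℂ)‖ = ‖(lam - (e : ℂ)) + ((e : ℂ) - (a : ℂ))‖ := by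
              rw [sub_add_sub_cancel]
          _ ≤ _ := norm_add_le _ _
      rw [hba'] at tri
      linarith [hδ1]
    have blog_far : ‖Complex.log (lam - (a : ℂ))‖ ≤ A + Real.pi :=
      hfarkey _ hfar_lo hfar_hi
    have term_far : ‖ν (c : ℂ) - ν (e : ℂ)‖ * ‖Complex.log (lam - (a : ℂ))‖
        ≤ L * (e - a) * (A + Real.pi) :=
      mul_le_mul bval' blog_far (norm_nonneg _) (mul_nonneg hL0 (by linarith))
    have term_near : ‖ν (c : ℂ) - ν (e : ℂ)‖ * ‖Complex.log (lam - (e : ℂ))‖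
        ≤ L * (1 + Real.pi) :=
      hnearkey _ rfl _ bval
    rw [split]
    calc ‖_ + _‖ ≤ ‖∫ μ in a..e, (ν (μ : ℂ) - ν (c : ℂ)) / ((μ : ℂ) - lam)‖
          + ‖(ν (c : ℂ) - ν (e : ℂ))
              * (Complex.log (lam - (e : ℂ)) - Complex.log (lam - (a : ℂ)))‖ :=
          norm_add_le _ _
      _ ≤ L * (e - a) + (‖ν (c : ℂ) - ν (e : ℂ)‖ * ‖Complex.log (lam - (e : ℂ))‖
            + ‖ν (c : ℂ) - ν (e : ℂ)‖ * ‖Complex.log (lam - (a : ℂ))‖) := by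
          refine add_le_add bound1 ?_
          rw [norm_mul]
          calc ‖ν (c : ℂ) - ν (e : ℂ)‖
                * ‖Complex.log (lam - (e : ℂ)) - Complex.log (lam - (a : ℂ))‖
              ≤ ‖ν (c : ℂ) - ν (e : ℂ)‖
                * (‖Complex.log (lam - (e : ℂ))‖ + ‖Complex.log (lam - (a : ℂ))‖) :=
                mul_le_mul_of_nonneg_left (norm_sub_le _ _) (norm_nonneg _)
            _ = _ := by ring
      _ ≤ L * (e - a) + (L * (1 + Real.pi) + L * (e - a) * (A + Real.pi)) :=
          add_le_add le_rfl (add_le_add term_near term_far)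
      _ ≤ C := by rw [hCdef]; linarith


/-- for `ν` holomorphic in a neighbourhood of `[a,b]`, the regularised
Cauchy integrals `∫_a^b (ν(μ)-ν(b))/(μ-λ) dμ` and `∫_a^b (ν(μ)-ν(a))/(μ-λ) dμ` stay
bounded as `λ ∉ [a,b]` approaches the corresponding endpoint. -/
theorem stmt19 (a b : ℝ) (hab : a < b) (U : Set ℂ) (hU : IsOpen U)
    (hUab : (fun x : ℝ => (x : ℂ)) '' Set.Icc a b ⊆ U)
    (ν : ℂ → ℂ) (hν : DifferentiableOn ℂ ν U) :
    (∃ C > (0 : ℝ), ∃ δ > (0 : ℝ),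
      ∀ lam : ℂ, lam ∉ (fun x : ℝ => (x : ℂ)) '' Set.Icc a b →
        0 < ‖lam - (b : ℂ)‖ → ‖lam - (b : ℂ)‖ < δ →
        ‖∫ μ in a..b, (ν μ - ν (b : ℂ)) / (μ - lam)‖ ≤ C) ∧
    (∃ C > (0 : ℝ), ∃ δ > (0 : ℝ),
      ∀ lam : ℂ, lam ∉ (fun x : ℝ => (x : ℂ)) '' Set.Icc a b →
        0 < ‖lam - (a : ℂ)‖ → ‖lam - (a : ℂ)‖ < δ →
        ‖∫ μ in a..b, (ν μ - ν (a : ℂ)) / (μ - lam)‖ ≤ C) :=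
  ⟨main_aux' a b hab U hU hUab ν hν b (Or.inr rfl),
   main_aux' a b hab U hU hUab ν hν a (Or.inl rfl)⟩
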